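/- arXiv:1611.07593 — 2 statements merged into one kernel-verified Lean document; each statement's English description precedes it below -/
import Mathlib

section
/- Let H = [[ω13·I, -W], [-Wᵀ, ω24·I]] be positive definite with ω13, ω24 > 0. Then the alternating updates z_t ← (ω1 φ + W z_s)/ω13 and z_s ← (ω2 ψ + Wᵀ z_t)/ω24 form a contraction on ℝ^{d_t} × ℝ^{d_s}: specifically the composed map z_s ↦ (ω2 ψ + Wᵀ(ω1 φ + W z_s)/ω13)/ω24 is Lipschitz with constant ‖W‖²/(ω13·ω24) < 1, and hence the alternating optimization converges to the unique global optimum. -/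
open Matrix

noncomputable def opNorm {m n : ℕ} (W : Matrix (Fin m) (Fin n) ℝ) : ℝ :=
  ‖LinearMap.toContinuousLinearMap (Matrix.toEuclideanLin W)‖

/-- Interpret a plain vector as a point of Euclidean space. -/
noncomputable def toEuc {n : ℕ} (v : Fin n → ℝ) : EuclideanSpace ℝ (Fin n) :=
  (WithLp.equiv 2 (Fin n → ℝ)).symm v

lemma toEuc_sub {n : ℕ} (u v : Fin n → ℝ) : toEuc u - toEuc v = toEuc (u - v) := rfl

lemma toEuc_smul {n : ℕ} (c : ℝ) (u : Fin n → ℝ) : toEuc (c • u) = c • toEuc u := rfl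

lemma norm_toEuc_sq {n : ℕ} (v : Fin n → ℝ) : ‖toEuc v‖ ^ 2 = v ⬝ᵥ v := by
  rw [EuclideanSpace.norm_sq_eq]
  simp [toEuc, dotProduct, Real.norm_eq_abs, sq]

lemma inner_toEuc {n : ℕ} (u v : Fin n → ℝ) :
    (inner ℝ (toEuc u) (toEuc v) : ℝ) = u ⬝ᵥ v := by
  simp [toEuc, PiLp.inner_apply, dotProduct, RCLike.inner_apply, mul_comm]

lemma pd_dot_lt (dt ds : ℕ) (W : Matrix (Fin dt) (Fin ds) ℝ) (ω13 ω24 : ℝ) (h13 : 0 < ω13)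
    (hPD : (Matrix.fromBlocks (ω13 • (1 : Matrix (Fin dt) (Fin dt) ℝ)) (-W)
      (-Wᵀ) (ω24 • (1 : Matrix (Fin ds) (Fin ds) ℝ))).PosDef)
    (b : Fin ds → ℝ) (hb : b ≠ 0) :
    (W *ᵥ b) ⬝ᵥ (W *ᵥ b) < ω13 * ω24 * (b ⬝ᵥ b) := by
  set a : Fin dt → ℝ := ω13⁻¹ • (W *ᵥ b) with ha
  have hv : (Sum.elim a b : Fin dt ⊕ Fin ds → ℝ) ≠ 0 := by
    intro h
    apply hb
    ext i
    simpa using congrFun h (Sum.inr i)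
  have key := (posDef_iff_dotProduct_mulVec.mp hPD).2 hv
  rw [fromBlocks_mulVec] at key
  simp only [Sum.elim_comp_inl, Sum.elim_comp_inr, star_trivial,
    sumElim_dotProduct_sumElim, smul_mulVec, one_mulVec, neg_mulVec,
    dotProduct_add, dotProduct_neg, dotProduct_smul, smul_eq_mul] at key
  have e1 : b ⬝ᵥ (Wᵀ *ᵥ a) = a ⬝ᵥ (W *ᵥ b) := by
    rw [dotProduct_mulVec, vecMul_transpose, dotProduct_comm]
  rw [e1, ha] at key
  simp only [smul_dotProduct, dotProduct_smul, smul_eq_mul] at key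
  set s := (W *ᵥ b) ⬝ᵥ (W *ᵥ b) with hs
  set t := b ⬝ᵥ b with ht
  have e : ω13 * (ω13⁻¹ * (ω13⁻¹ * s)) = ω13⁻¹ * s := by field_simp
  rw [e] at key
  have key2 : ω13⁻¹ * s < ω24 * t := by linarith
  calc s = ω13 * (ω13⁻¹ * s) := by field_simp
    _ < ω13 * (ω24 * t) := mul_lt_mul_of_pos_left key2 h13
    _ = ω13 * ω24 * t := by ring

theorem stmt6 (dt ds : ℕ) (W : Matrix (Fin dt) (Fin ds) ℝ)
    (φ : EuclideanSpace ℝ (Fin dt)) (ψ : EuclideanSpace ℝ (Fin ds))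
    (ω1 ω2 ω13 ω24 : ℝ) (h13 : 0 < ω13) (h24 : 0 < ω24)
    (hPD : (Matrix.fromBlocks (ω13 • (1 : Matrix (Fin dt) (Fin dt) ℝ)) (-W)
      (-Wᵀ) (ω24 • (1 : Matrix (Fin ds) (Fin ds) ℝ))).PosDef)
    (T : EuclideanSpace ℝ (Fin ds) → EuclideanSpace ℝ (Fin ds))
    (hT : ∀ zs, T zs =
      ω24⁻¹ • (ω2 • ψ + toEuc (Wᵀ *ᵥ (ω13⁻¹ • (ω1 • φ + toEuc (W *ᵥ zs)))))) :
    LipschitzWith (Real.toNNReal (opNorm W ^ 2 / (ω13 * ω24))) T ∧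
    opNorm W ^ 2 / (ω13 * ω24) < 1 ∧
    ∃! zs : EuclideanSpace ℝ (Fin ds), T zs = zs ∧
      ∀ z0 : EuclideanSpace ℝ (Fin ds),
        Filter.Tendsto (fun k => T^[k] z0) Filter.atTop (nhds zs) := by
  set A := LinearMap.toContinuousLinearMap (Matrix.toEuclideanLin W) with hA
  have hAapp : ∀ x : EuclideanSpace ℝ (Fin ds), A x = toEuc (W *ᵥ x) := fun _ => rfl
  -- squared-norm bound for nonzero vectors
  have hsq : ∀ x : EuclideanSpace ℝ (Fin ds), x ≠ 0 → ‖A x‖ ^ 2 < ω13 * ω24 * ‖x‖ ^ 2 := by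
    intro x hx
    have hx' : (x : Fin ds → ℝ) ≠ 0 := by
      intro h; apply hx; ext i; simpa using congrFun h i
    have h1 := pd_dot_lt dt ds W ω13 ω24 h13 hPD x hx'
    have h2 : ‖A x‖ ^ 2 = (W *ᵥ x) ⬝ᵥ (W *ᵥ x) := by rw [hAapp, norm_toEuc_sq]
    have h3 : ‖x‖ ^ 2 = (x : Fin ds → ℝ) ⬝ᵥ x := norm_toEuc_sq x
    rw [h2, h3]; exact h1
  have hpos : (0 : ℝ) < ω13 * ω24 := mul_pos h13 h24
  -- operator norm bound
  have hOp : opNorm W ^ 2 < ω13 * ω24 := by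
    have hOpA : opNorm W = ‖A‖ := rfl
    rcases Nat.eq_zero_or_pos ds with hds | hds
    · subst hds
      have hA0 : A = 0 := by
        ext x
        have : x = 0 := Subsingleton.elim x 0
        simp [this]
      rw [hOpA, hA0]
      simpa using hpos
    · haveI : Nontrivial (EuclideanSpace ℝ (Fin ds)) := by
        refine ⟨toEuc (fun _ => 0), toEuc (fun _ => 1), fun h => ?_⟩
        have := congrFun (congrArg (WithLp.equiv 2 (Fin ds → ℝ)) h) ⟨0, hds⟩
        simpa [toEuc] using this
      have hc : IsCompact (Metric.sphere (0 : EuclideanSpace ℝ (Fin ds)) 1) := isCompact_sphere _ _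
      have hne : (Metric.sphere (0 : EuclideanSpace ℝ (Fin ds)) 1).Nonempty :=
        NormedSpace.sphere_nonempty.mpr zero_le_one
      obtain ⟨y0, hy0, hmax⟩ := hc.exists_isMaxOn hne
        ((continuous_norm.comp A.continuous).continuousOn)
      have hy0n : ‖y0‖ = 1 := by simpa using hy0
      have hAle : ‖A‖ ≤ ‖A y0‖ := by
        refine A.opNorm_le_bound (norm_nonneg _) fun y => ?_
        rcases eq_or_ne y 0 with rfl | hy
        · simp
        · have h1 : ‖y‖ ≠ 0 := norm_ne_zero_iff.mpr hy
          have hmem : (‖y‖⁻¹ • y) ∈ Metric.sphere (0 : EuclideanSpace ℝ (Fin ds)) 1 := by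
            simp [norm_smul, inv_mul_cancel₀ h1, abs_of_nonneg (inv_nonneg.mpr (norm_nonneg y))]
          have h2 : ‖A (‖y‖⁻¹ • y)‖ ≤ ‖A y0‖ := hmax hmem
          rw [_root_.map_smul, norm_smul, norm_inv, norm_norm] at h2
          calc ‖A y‖ = ‖y‖ * (‖y‖⁻¹ * ‖A y‖) := by field_simp
            _ ≤ ‖y‖ * ‖A y0‖ := by
                exact mul_le_mul_of_nonneg_left h2 (norm_nonneg y)
            _ = ‖A y0‖ * ‖y‖ := mul_comm _ _
      have hy0ne : y0 ≠ 0 := by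
        intro h; rw [h, norm_zero] at hy0n; exact zero_ne_one hy0n
      have h4 := hsq y0 hy0ne
      rw [hy0n] at h4
      have h5 : ‖A y0‖ ^ 2 < ω13 * ω24 := by simpa using h4
      calc opNorm W ^ 2 ≤ ‖A y0‖ ^ 2 := by
            rw [hOpA]; exact pow_le_pow_left₀ (norm_nonneg _) hAle 2
        _ < ω13 * ω24 := h5
  have hK1 : opNorm W ^ 2 / (ω13 * ω24) < 1 := (div_lt_one hpos).mpr hOp
  have hKnn : (0 : ℝ) ≤ opNorm W ^ 2 / (ω13 * ω24) := by positivity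
  -- transpose bound : ‖Wᵀ u‖ ≤ ‖A‖ * ‖u‖
  have hAnn : (0:ℝ) ≤ ‖A‖ := norm_nonneg _
  have hB : ∀ u : Fin dt → ℝ, ‖toEuc (Wᵀ *ᵥ u)‖ ≤ ‖A‖ * ‖toEuc u‖ := by
    intro u
    have h1 : ‖toEuc (Wᵀ *ᵥ u)‖ ^ 2 = u ⬝ᵥ (W *ᵥ (Wᵀ *ᵥ u)) := by
      rw [norm_toEuc_sq, dotProduct_mulVec u, ← mulVec_transpose]
    have h2 : u ⬝ᵥ (W *ᵥ (Wᵀ *ᵥ u)) = (inner ℝ (toEuc u) (A (toEuc (Wᵀ *ᵥ u))) : ℝ) := by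
      rw [hAapp, inner_toEuc]; rfl
    have h3 : (inner ℝ (toEuc u) (A (toEuc (Wᵀ *ᵥ u))) : ℝ) ≤ ‖toEuc u‖ * (‖A‖ * ‖toEuc (Wᵀ *ᵥ u)‖) :=
      le_trans (real_inner_le_norm _ _)
        (mul_le_mul_of_nonneg_left (A.le_opNorm _) (norm_nonneg _))
    have h4 : ‖toEuc (Wᵀ *ᵥ u)‖ ^ 2 ≤ ‖toEuc u‖ * (‖A‖ * ‖toEuc (Wᵀ *ᵥ u)‖) := by
      rw [h1, h2]; exact h3
    rcases eq_or_lt_of_le (norm_nonneg (toEuc (Wᵀ *ᵥ u))) with h0 | h0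
    · rw [← h0]; positivity
    · have := h4
      rw [pow_two] at this
      have h5 : ‖toEuc (Wᵀ *ᵥ u)‖ * ‖toEuc (Wᵀ *ᵥ u)‖ ≤ (‖A‖ * ‖toEuc u‖) * ‖toEuc (Wᵀ *ᵥ u)‖ := by
        calc ‖toEuc (Wᵀ *ᵥ u)‖ * ‖toEuc (Wᵀ *ᵥ u)‖ ≤ ‖toEuc u‖ * (‖A‖ * ‖toEuc (Wᵀ *ᵥ u)‖) := this
          _ = (‖A‖ * ‖toEuc u‖) * ‖toEuc (Wᵀ *ᵥ u)‖ := by ring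
      exact le_of_mul_le_mul_right h5 h0
  -- the difference identity
  have hdiff : ∀ x y : EuclideanSpace ℝ (Fin ds), T x - T y = (ω24⁻¹ * ω13⁻¹) • toEuc (Wᵀ *ᵥ (W *ᵥ (x - y))) := by
    intro x y
    rw [hT x, hT y, ← smul_sub, add_sub_add_left_eq_sub, toEuc_sub, ← mulVec_sub]
    have h1 : (ω13⁻¹ • (ω1 • φ + toEuc (W *ᵥ x)) : EuclideanSpace ℝ (Fin dt))
        - ω13⁻¹ • (ω1 • φ + toEuc (W *ᵥ y)) = ω13⁻¹ • toEuc (W *ᵥ (x - y)) := by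
      rw [← smul_sub, add_sub_add_left_eq_sub, toEuc_sub, ← mulVec_sub]
    rw [show (ω13⁻¹ • (ω1 • φ.ofLp + (toEuc (W *ᵥ x)).ofLp)
        - ω13⁻¹ • (ω1 • φ.ofLp + (toEuc (W *ᵥ y)).ofLp) : Fin dt → ℝ) = ω13⁻¹ • (toEuc (W *ᵥ (x - y))).ofLp from congrArg WithLp.ofLp h1,
      show (ω13⁻¹ • toEuc (W *ᵥ (x - y)) : Fin dt → ℝ) = ω13⁻¹ • (W *ᵥ (x - y)) from rfl,
      mulVec_smul, toEuc_smul, smul_smul]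
  -- Lipschitz
  have hLip : LipschitzWith (Real.toNNReal (opNorm W ^ 2 / (ω13 * ω24))) T := by
    apply LipschitzWith.of_dist_le_mul
    intro x y
    rw [Real.coe_toNNReal _ hKnn, dist_eq_norm, dist_eq_norm, hdiff x y]
    calc ‖(ω24⁻¹ * ω13⁻¹) • toEuc (Wᵀ *ᵥ (W *ᵥ (x - y)))‖
        = (ω24⁻¹ * ω13⁻¹) * ‖toEuc (Wᵀ *ᵥ (W *ᵥ (x - y)))‖ := by
          rw [norm_smul, Real.norm_eq_abs, abs_of_nonneg (by positivity)]
      _ ≤ (ω24⁻¹ * ω13⁻¹) * (‖A‖ * ‖toEuc (W *ᵥ (x - y))‖) := by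
          exact mul_le_mul_of_nonneg_left (hB _) (by positivity)
      _ = (ω24⁻¹ * ω13⁻¹) * (‖A‖ * ‖A (x - y)‖) := by rw [hAapp]; rfl
      _ ≤ (ω24⁻¹ * ω13⁻¹) * (‖A‖ * (‖A‖ * ‖x - y‖)) := by
          refine mul_le_mul_of_nonneg_left (mul_le_mul_of_nonneg_left (A.le_opNorm _) hAnn)
            (by positivity)
      _ = opNorm W ^ 2 / (ω13 * ω24) * ‖x - y‖ := by
          have : opNorm W = ‖A‖ := rfl
          rw [this]; field_simp
  refine ⟨hLip, hK1, ?_⟩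
  -- contraction fixed point
  have hcon : ContractingWith (Real.toNNReal (opNorm W ^ 2 / (ω13 * ω24))) T := by
    constructor
    · rwa [← NNReal.coe_lt_one, Real.coe_toNNReal _ hKnn]
    · exact hLip
  refine ⟨ContractingWith.fixedPoint T hcon, ⟨hcon.fixedPoint_isFixedPt, fun z0 =>
    hcon.tendsto_iterate_fixedPoint z0⟩, ?_⟩
  intro z hz
  exact hcon.fixedPoint_unique hz.1
end

section
/- Let f: ℝ^{d_t} × ℝ^{d_s} → ℝ be defined by f(z_t, z_s) = z_tᵀ W z_s − (ω1/2)‖z_t − φ‖² − (ω2/2)‖z_s − ψ‖² − (ω3/2)‖z_t‖² − (ω4/2)‖z_s‖². If ω1+ω3 > 0, ω2+ω4 > 0, and ‖W‖²_op < (ω1+ω3)(ω2+ω4), then f is strictly concave, and its unique maximizer is (z_t*, z_s*) = H⁻¹ · (ω1 φ, ω2 ψ) where H = [[(ω1+ω3)I, -W], [-Wᵀ, (ω2+ω4)I]]. -/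
open Matrix
open scoped RealInnerProductSpace

lemma aux_bound {dt ds : ℕ} (W : Matrix (Fin dt) (Fin ds) ℝ) (x : Fin dt → ℝ) (y : Fin ds → ℝ) :
    x ⬝ᵥ W *ᵥ y ≤ opNorm W * Real.sqrt (x ⬝ᵥ x) * Real.sqrt (y ⬝ᵥ y) := by
  set x' : EuclideanSpace ℝ (Fin dt) := (WithLp.equiv 2 _).symm x with hx'
  set y' : EuclideanSpace ℝ (Fin ds) := (WithLp.equiv 2 _).symm y with hy'
  have hx : ‖x'‖ = Real.sqrt (x ⬝ᵥ x) := by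
    rw [EuclideanSpace.norm_eq]
    congr 1
    simp [dotProduct, hx', Real.norm_eq_abs, sq_abs, sq]
  have hy : ‖y'‖ = Real.sqrt (y ⬝ᵥ y) := by
    rw [EuclideanSpace.norm_eq]
    congr 1
    simp [dotProduct, hy', Real.norm_eq_abs, sq_abs, sq]
  have hinner : x ⬝ᵥ W *ᵥ y = ⟪x', Matrix.toEuclideanLin W y'⟫ := by
    rw [hy', WithLp.equiv_symm_apply, Matrix.toEuclideanLin_apply_piLp_toLp]
    simp [PiLp.inner_apply, dotProduct, hx', RCLike.inner_apply, mul_comm]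
  have h1 : ⟪x', Matrix.toEuclideanLin W y'⟫ ≤ ‖x'‖ * ‖Matrix.toEuclideanLin W y'‖ :=
    real_inner_le_norm _ _
  have h2 : ‖Matrix.toEuclideanLin W y'‖ ≤ opNorm W * ‖y'‖ :=
    (LinearMap.toContinuousLinearMap (Matrix.toEuclideanLin W)).le_opNorm y'
  have h3 : (0:ℝ) ≤ ‖x'‖ := norm_nonneg _
  rw [hinner, ← hx, ← hy]
  nlinarith [norm_nonneg (Matrix.toEuclideanLin W y')]

lemma aux_pos {dt ds : ℕ} (W : Matrix (Fin dt) (Fin ds) ℝ) {a b : ℝ}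
    (ha : 0 < a) (hb : 0 < b) (hW : opNorm W ^ 2 < a * b)
    (x : Fin dt → ℝ) (y : Fin ds → ℝ) (hxy : x ≠ 0 ∨ y ≠ 0) :
    0 < a * (x ⬝ᵥ x) + b * (y ⬝ᵥ y) - 2 * (x ⬝ᵥ W *ᵥ y) := by
  have dotProduct_self_nonneg : ∀ {k : ℕ} (v : Fin k → ℝ), 0 ≤ v ⬝ᵥ v := by
    intro k v
    exact Finset.sum_nonneg fun i _ => mul_self_nonneg (v i)
  set c := opNorm W with hc
  have hc0 : 0 ≤ c := norm_nonneg _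
  set n1 := Real.sqrt (x ⬝ᵥ x) with hn1
  set n2 := Real.sqrt (y ⬝ᵥ y) with hn2
  have hxx : x ⬝ᵥ x = n1 ^ 2 := (Real.sq_sqrt (dotProduct_self_nonneg x)).symm
  have hyy : y ⬝ᵥ y = n2 ^ 2 := (Real.sq_sqrt (dotProduct_self_nonneg y)).symm
  have hn1n : 0 ≤ n1 := Real.sqrt_nonneg _
  have hn2n : 0 ≤ n2 := Real.sqrt_nonneg _
  have hd1 : x ⬝ᵥ W *ᵥ y ≤ c * n1 * n2 := aux_bound W x y
  have hd2 : -(x ⬝ᵥ W *ᵥ y) ≤ c * n1 * n2 := by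
    have := aux_bound W (-x) y
    simpa [neg_dotProduct, hn1, hn2, dotProduct_neg] using this
  have hpos : 0 < n1 ^ 2 + n2 ^ 2 := by
    rcases hxy with h | h
    · have : 0 < x ⬝ᵥ x := by
        rcases lt_or_eq_of_le (dotProduct_self_nonneg x) with h' | h'
        · exact h'
        · exact absurd (dotProduct_self_eq_zero.mp h'.symm) h
      nlinarith [sq_nonneg n2]
    · have : 0 < y ⬝ᵥ y := by
        rcases lt_or_eq_of_le (dotProduct_self_nonneg y) with h' | h'
        · exact h'
        · exact absurd (dotProduct_self_eq_zero.mp h'.symm) h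
      nlinarith [sq_nonneg n1]
  rw [hxx, hyy]
  nlinarith [sq_nonneg (a*n1 - c*n2), sq_nonneg (b*n2 - c*n1),
    mul_pos (sub_pos.mpr hW) hpos, mul_nonneg (mul_nonneg hc0 hn1n) hn2n,
    mul_pos ha hb]

theorem stmt9 (dt ds : ℕ) (W : Matrix (Fin dt) (Fin ds) ℝ)
    (φ : Fin dt → ℝ) (ψ : Fin ds → ℝ) (ω1 ω2 ω3 ω4 : ℝ)
    (h1 : 0 ≤ ω1) (h2 : 0 ≤ ω2) (h3 : 0 ≤ ω3) (h4 : 0 ≤ ω4)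
    (h13 : 0 < ω1 + ω3) (h24 : 0 < ω2 + ω4)
    (hW : opNorm W ^ 2 < (ω1 + ω3) * (ω2 + ω4))
    (f : (Fin dt → ℝ) × (Fin ds → ℝ) → ℝ)
    (hf : ∀ p, f p =
      p.1 ⬝ᵥ W *ᵥ p.2 - ω1 / 2 * ((p.1 - φ) ⬝ᵥ (p.1 - φ))
        - ω2 / 2 * ((p.2 - ψ) ⬝ᵥ (p.2 - ψ))
        - ω3 / 2 * (p.1 ⬝ᵥ p.1) - ω4 / 2 * (p.2 ⬝ᵥ p.2))
    (H : Matrix (Fin dt ⊕ Fin ds) (Fin dt ⊕ Fin ds) ℝ)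
    (hH : H = Matrix.fromBlocks ((ω1 + ω3) • (1 : Matrix (Fin dt) (Fin dt) ℝ)) (-W)
      (-Wᵀ) ((ω2 + ω4) • (1 : Matrix (Fin ds) (Fin ds) ℝ)))
    (zstar : Fin dt ⊕ Fin ds → ℝ)
    (hz : zstar = H⁻¹ *ᵥ Sum.elim (ω1 • φ) (ω2 • ψ)) :
    StrictConcaveOn ℝ Set.univ f ∧
    ∀ p : (Fin dt → ℝ) × (Fin ds → ℝ),
      p ≠ (fun i => zstar (Sum.inl i), fun j => zstar (Sum.inr j)) →
      f p < f (fun i => zstar (Sum.inl i), fun j => zstar (Sum.inr j)) := by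
  constructor
  · -- strict concavity
    refine ⟨convex_univ, ?_⟩
    intro x _ y _ hxy t s ht hs hts
    have hne : x.1 - y.1 ≠ 0 ∨ x.2 - y.2 ≠ 0 := by
      by_contra h
      push_neg at h
      exact hxy (Prod.ext (sub_eq_zero.mp h.1) (sub_eq_zero.mp h.2))
    have hQ : 0 < (ω1 + ω3) * ((x.1 - y.1) ⬝ᵥ (x.1 - y.1))
        + (ω2 + ω4) * ((x.2 - y.2) ⬝ᵥ (x.2 - y.2))
        - 2 * ((x.1 - y.1) ⬝ᵥ W *ᵥ (x.2 - y.2)) := aux_pos W h13 h24 hW _ _ hne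
    have key : f (t • x + s • y) - (t * f x + s * f y)
        = t * s / 2 * ((ω1 + ω3) * ((x.1 - y.1) ⬝ᵥ (x.1 - y.1))
          + (ω2 + ω4) * ((x.2 - y.2) ⬝ᵥ (x.2 - y.2))
          - 2 * ((x.1 - y.1) ⬝ᵥ W *ᵥ (x.2 - y.2))) := by
      rw [hf, hf, hf]
      simp only [Prod.fst_add, Prod.snd_add, Prod.smul_fst, Prod.smul_snd,
        smul_eq_mul]
      simp only [mulVec_add, mulVec_smul, mulVec_sub, dotProduct_add, add_dotProduct,
        dotProduct_smul, smul_dotProduct, dotProduct_sub, sub_dotProduct,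
        smul_eq_mul]
      rw [dotProduct_comm y.1 x.1, dotProduct_comm y.2 x.2,
        dotProduct_comm φ x.1, dotProduct_comm φ y.1,
        dotProduct_comm ψ x.2, dotProduct_comm ψ y.2]
      have hs' : s = 1 - t := by linarith
      rw [hs']
      ring
    have hpos : 0 < t * s / 2 := by positivity
    have := mul_pos hpos hQ
    simp only [smul_eq_mul]
    linarith [key]
  · -- unique maximizer
    -- quadratic form of H is positive definite
    have hquad : ∀ v : Fin dt ⊕ Fin ds → ℝ, v ≠ 0 → 0 < v ⬝ᵥ H *ᵥ v := by
      intro v hv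
      have hv' : v = Sum.elim (v ∘ Sum.inl) (v ∘ Sum.inr) := by
        funext i; cases i <;> rfl
      have hne : (v ∘ Sum.inl) ≠ 0 ∨ (v ∘ Sum.inr) ≠ 0 := by
        by_contra h
        push_neg at h
        apply hv
        rw [hv', h.1, h.2]
        funext i; cases i <;> rfl
      rw [hH]
      nth_rewrite 1 [hv']
      nth_rewrite 2 [hv']
      rw [fromBlocks_mulVec, sumElim_dotProduct_sumElim]
      have ht : (v ∘ Sum.inr) ⬝ᵥ Wᵀ *ᵥ (v ∘ Sum.inl)
          = (v ∘ Sum.inl) ⬝ᵥ W *ᵥ (v ∘ Sum.inr) := by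
        rw [dotProduct_mulVec, vecMul_transpose, dotProduct_comm]
      simp only [Sum.elim_comp_inl, Sum.elim_comp_inr]
      simp only [dotProduct_add, neg_mulVec, dotProduct_neg, ht,
        smul_mulVec, one_mulVec, dotProduct_smul, smul_eq_mul]
      have := aux_pos W h13 h24 hW (v ∘ Sum.inl) (v ∘ Sum.inr) hne
      linarith
    -- H is invertible
    have hunit : IsUnit H := by
      rw [← Matrix.mulVec_injective_iff_isUnit]
      intro u u' huu
      by_contra hne
      have h0 : H *ᵥ (u - u') = 0 := by rw [mulVec_sub, huu, sub_self]
      have := hquad (u - u') (fun h => hne (sub_eq_zero.mp h))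
      rw [h0, dotProduct_zero] at this
      exact lt_irrefl 0 this
    have hHz : H *ᵥ zstar = Sum.elim (ω1 • φ) (ω2 • ψ) := by
      rw [hz, mulVec_mulVec, Matrix.mul_nonsing_inv _
        ((Matrix.isUnit_iff_isUnit_det H).mp hunit), one_mulVec]
    set z1 : Fin dt → ℝ := fun i => zstar (Sum.inl i) with hz1
    set z2 : Fin ds → ℝ := fun j => zstar (Sum.inr j) with hz2
    have hzs : zstar = Sum.elim z1 z2 := by funext i; cases i <;> rfl
    have e1 : (ω1 + ω3) • z1 + (-W) *ᵥ z2 = ω1 • φ := by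
      funext i
      have := congrFun hHz (Sum.inl i)
      rw [hH, hzs, fromBlocks_mulVec] at this
      simpa [smul_mulVec, one_mulVec] using this
    have e2 : (-Wᵀ) *ᵥ z1 + (ω2 + ω4) • z2 = ω2 • ψ := by
      funext j
      have := congrFun hHz (Sum.inr j)
      rw [hH, hzs, fromBlocks_mulVec] at this
      simpa [smul_mulVec, one_mulVec] using this
    intro p hp
    set v1 : Fin dt → ℝ := p.1 - z1 with hv1
    set v2 : Fin ds → ℝ := p.2 - z2 with hv2
    have hne : v1 ≠ 0 ∨ v2 ≠ 0 := by
      by_contra h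
      push_neg at h
      exact hp (Prod.ext (sub_eq_zero.mp h.1) (sub_eq_zero.mp h.2))
    have hQ : 0 < (ω1 + ω3) * (v1 ⬝ᵥ v1) + (ω2 + ω4) * (v2 ⬝ᵥ v2)
        - 2 * (v1 ⬝ᵥ W *ᵥ v2) := aux_pos W h13 h24 hW _ _ hne
    -- dotted stationarity equations
    have ev1 : (ω1 + ω3) * (v1 ⬝ᵥ z1) - v1 ⬝ᵥ W *ᵥ z2 = ω1 * (v1 ⬝ᵥ φ) := by
      have := congrArg (fun w => v1 ⬝ᵥ w) e1
      simpa [dotProduct_add, neg_mulVec, dotProduct_neg, dotProduct_smul,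
        smul_eq_mul, sub_eq_add_neg] using this
    have ev2 : (ω2 + ω4) * (v2 ⬝ᵥ z2) - z1 ⬝ᵥ W *ᵥ v2 = ω2 * (v2 ⬝ᵥ ψ) := by
      have h := congrArg (fun w => v2 ⬝ᵥ w) e2
      have ht : v2 ⬝ᵥ (-Wᵀ) *ᵥ z1 = -(z1 ⬝ᵥ W *ᵥ v2) := by
        rw [neg_mulVec, dotProduct_neg, dotProduct_mulVec, vecMul_transpose,
          dotProduct_comm]
      simp only [dotProduct_add, ht, dotProduct_smul, smul_eq_mul] at h
      linarith
    have key : f p = f (z1, z2) - 1 / 2 * ((ω1 + ω3) * (v1 ⬝ᵥ v1)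
        + (ω2 + ω4) * (v2 ⬝ᵥ v2) - 2 * (v1 ⬝ᵥ W *ᵥ v2)) := by
      rw [hf, hf]
      simp only [hv1, hv2]
      simp only [mulVec_sub, dotProduct_sub, sub_dotProduct]
      rw [dotProduct_comm φ p.1, dotProduct_comm φ z1,
        dotProduct_comm ψ p.2, dotProduct_comm ψ z2,
        dotProduct_comm z1 p.1, dotProduct_comm z2 p.2]
      rw [hv1] at ev1
      rw [hv2] at ev2
      simp only [mulVec_sub, dotProduct_sub, sub_dotProduct] at ev1 ev2
      linear_combination -ev1 - ev2
    rw [key]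
    linarith
end
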